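/- Let X be a finite set with |X| ≥ 4 and S = {Y₁,…,Yₖ} a collection of subsets of X satisfying the four-way partition property. Then every 3-element subset {x,y,z} of X is contained in some Yⱼ with |Yⱼ| ≥ 4. -/

import Mathlib

/-- If `|X| ≥ 4` and the collection `S` of subsets of `X` satisfies the four-way partition
property, then every 3-element subset of `X` is contained in some member `Y` of `S`
with `|Y| ≥ 4`. -/
theorem triple_in_big_set_of_fourWay {α : Type*} [DecidableEq α]
    (X : Finset α) (hX : 4 ≤ X.card) (S : Finset (Finset α)) (hS : ∀ Y ∈ S, Y ⊆ X)
    (hfour : ∀ X1 X2 X3 X4 : Finset α,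
      X1.Nonempty → X2.Nonempty → X3.Nonempty → X4.Nonempty →
      X1 ∪ X2 ∪ X3 ∪ X4 = X →
      Disjoint X1 X2 → Disjoint X1 X3 → Disjoint X1 X4 →
      Disjoint X2 X3 → Disjoint X2 X4 → Disjoint X3 X4 →
      ∃ x1 ∈ X1, ∃ x2 ∈ X2, ∃ x3 ∈ X3, ∃ x4 ∈ X4,
        ∃ Y ∈ S, ({x1, x2, x3, x4} : Finset α) ⊆ Y) :
    ∀ T : Finset α, T ⊆ X → T.card = 3 → ∃ Y ∈ S, T ⊆ Y ∧ 4 ≤ Y.card := by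
  intro T hTX hT3
  obtain ⟨x, y, z, hxy, hxz, hyz, rfl⟩ := Finset.card_eq_three.mp hT3
  have hR : (X \ ({x, y, z} : Finset α)).Nonempty := by
    rw [← Finset.card_pos, Finset.card_sdiff_of_subset hTX, hT3]
    omega
  obtain ⟨x1, hx1, x2, hx2, x3, hx3, x4, hx4, Y, hYS, hYsub⟩ :=
    hfour {x} {y} {z} (X \ {x, y, z}) (by simp) (by simp) (by simp) hR
      (by
        have h1 : ({x} : Finset α) ∪ {y} ∪ {z} ∪ (X \ {x, y, z}) =
            ({x, y, z} : Finset α) ∪ (X \ {x, y, z}) := by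
          ext a; simp
        rw [h1, Finset.union_sdiff_of_subset hTX])
      (by simp [hxy]) (by simp [hxz])
      (by simp)
      (by simp [hyz])
      (by simp)
      (by simp)
  simp only [Finset.mem_singleton] at hx1 hx2 hx3
  subst hx1 hx2 hx3
  have hx4' : x4 ∉ ({x1, x2, x3} : Finset α) := (Finset.mem_sdiff.mp hx4).2
  refine ⟨Y, hYS, ?_, ?_⟩
  · intro a ha
    apply hYsub
    simp only [Finset.mem_insert, Finset.mem_singleton] at ha ⊢
    tauto
  · have h4 : ({x1, x2, x3, x4} : Finset α).card = 4 := by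
      have h41 : ¬x4 = x1 ∧ ¬x4 = x2 ∧ ¬x4 = x3 := by
        simpa [not_or] using hx4'
      have m1 : x1 ∉ ({x2, x3, x4} : Finset α) := by
        simp only [Finset.mem_insert, Finset.mem_singleton]
        push_neg
        exact ⟨hxy, hxz, fun h => h41.1 h.symm⟩
      have m2 : x2 ∉ ({x3, x4} : Finset α) := by
        simp only [Finset.mem_insert, Finset.mem_singleton]
        push_neg
        exact ⟨hyz, fun h => h41.2.1 h.symm⟩
      have m3 : x3 ∉ ({x4} : Finset α) := by
        simp only [Finset.mem_singleton]
        exact fun h => h41.2.2 h.symm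
      rw [Finset.card_insert_of_notMem m1, Finset.card_insert_of_notMem m2,
        Finset.card_insert_of_notMem m3, Finset.card_singleton]
    calc 4 = ({x1, x2, x3, x4} : Finset α).card := h4.symm
      _ ≤ Y.card := Finset.card_le_card hYsub
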